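/- Combining the DKW-type bound with the set inclusion argument: if Z¹,…,Zᴺ are i.i.d. copies of a random variable Z with continuous CDF F_Z, F̂(α) := (1/N)∑ᵢ 𝟙(Zⁱ ≤ α) is the empirical CDF, and δ ∈ (0,1), then with probability at least 1 − δ, inf{α | F̂(α) + √(ln(2/δ)/(2N)) ≥ β} ≤ VaR_β(Z) ≤ inf{α | F̂(α) − √(ln(2/δ)/(2N)) ≥ β}, where VaR_β(Z) = inf{α | F_Z(α) ≥ β}. -/

import Mathlib

open MeasureTheory

lemma sInf_image_toEReal_le {S : Set ℝ} (hne : S.Nonempty) (hbd : BddBelow S) :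
    sInf (Real.toEReal '' S) ≤ ((sInf S : ℝ) : EReal) := by
  by_contra h
  push_neg at h
  obtain ⟨a, ha⟩ := id hne
  have hle : sInf (Real.toEReal '' S) ≤ (a : EReal) :=
    sInf_le ⟨a, ha, rfl⟩
  obtain ⟨z, hz1, hz2⟩ := exists_between h
  have hzt : z ≠ ⊤ := by
    intro hzt; rw [hzt] at hz2
    exact absurd (lt_of_lt_of_le hz2 hle) (by simp)
  have hzb : z ≠ ⊥ := by
    intro hzb; rw [hzb] at hz1; exact absurd hz1 (by simp)
  lift z to ℝ using ⟨hzt, hzb⟩ with y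
  have hy : sInf S < y := by exact_mod_cast hz1
  obtain ⟨b, hb, hby⟩ := (csInf_lt_iff hbd hne).mp hy
  have : (y : EReal) < (b : EReal) :=
    lt_of_lt_of_le hz2 (sInf_le ⟨b, hb, rfl⟩)
  exact absurd (by exact_mod_cast this) (not_lt.mpr hby.le)

lemma le_sInf_image_toEReal {S : Set ℝ} (hbd : BddBelow S) :
    ((sInf S : ℝ) : EReal) ≤ sInf (Real.toEReal '' S) := by
  refine le_sInf ?_
  rintro b ⟨a, ha, rfl⟩
  exact_mod_cast csInf_le hbd ha

/-- Combining the DKW-type bound with the set-inclusion argument: if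
`Z¹, …, Zᴺ` are i.i.d. copies of a random variable `Z` with continuous CDF
`F_Z`, `F̂(α) := (1/N) ∑ᵢ 𝟙(Zⁱ ≤ α)` is the empirical CDF, and `δ ∈ (0,1)`,
then with probability at least `1 − δ`,
`inf {α | F̂(α) + ε ≥ β} ≤ VaR_β(Z) ≤ inf {α | F̂(α) − ε ≥ β}`, where
`ε := √(ln(2/δ)/(2N))`, `VaR_β(Z) = inf {α | F_Z(α) ≥ β}`, and the outer
infima are taken in the extended reals with `inf ∅ = +∞`. -/
theorem var_estimate_dkw {Ω : Type*} [MeasurableSpace Ω] (P : Measure Ω)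
    [IsProbabilityMeasure P] (Z : Ω → ℝ) (hZ : Measurable Z)
    (F : ℝ → ℝ) (hFdef : ∀ α : ℝ, F α = (P {ω | Z ω ≤ α}).toReal)
    (hFcont : Continuous F)
    (N : ℕ) (hN : 0 < N) (Zs : Fin N → Ω → ℝ) (hZs : ∀ i, Measurable (Zs i))
    (hindep : ProbabilityTheory.iIndepFun Zs P)
    (hident : ∀ i, Measure.map (Zs i) P = Measure.map Z P)
    (Fhat : Ω → ℝ → ℝ)
    (hFhat : ∀ ω α, Fhat ω α =
      (1 / (N : ℝ)) * ∑ i : Fin N, (if Zs i ω ≤ α then (1 : ℝ) else 0))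
    (β δ : ℝ) (hβ : β ∈ Set.Ioo (0 : ℝ) 1) (hδ : δ ∈ Set.Ioo (0 : ℝ) 1)
    (hDKW : ∀ c : ℝ, 0 < c →
      P {ω | ∃ α : ℝ, c < |Fhat ω α - F α|} ≤
        ENNReal.ofReal (2 * Real.exp (-2 * N * c ^ 2))) :
    ENNReal.ofReal (1 - δ) ≤
      P {ω |
        sInf (Real.toEReal ''
            {α : ℝ | β ≤ Fhat ω α + Real.sqrt (Real.log (2 / δ) / (2 * N))}) ≤
          ((sInf {α : ℝ | β ≤ F α} : ℝ) : EReal) ∧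
        ((sInf {α : ℝ | β ≤ F α} : ℝ) : EReal) ≤
          sInf (Real.toEReal ''
            {α : ℝ | β ≤ Fhat ω α - Real.sqrt (Real.log (2 / δ) / (2 * N))})} := by
  obtain ⟨hβ0, hβ1⟩ := hβ
  obtain ⟨hδ0, hδ1⟩ := hδ
  set ε : ℝ := Real.sqrt (Real.log (2 / δ) / (2 * N)) with hεdef
  -- F is the cdf of the pushforward measure
  set μ : Measure ℝ := Measure.map Z P with hμ
  have hμprob : IsProbabilityMeasure μ := Measure.isProbabilityMeasure_map hZ.aemeasurable
  have hFcdf : ∀ α, F α = ProbabilityTheory.cdf μ α := by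
    intro α
    rw [ProbabilityTheory.cdf_eq_real, measureReal_def, hFdef, hμ,
      Measure.map_apply hZ measurableSet_Iic]
    rfl
  -- positivity of ε
  have hlogpos : 0 < Real.log (2 / δ) := by
    apply Real.log_pos
    rw [lt_div_iff₀ hδ0]
    nlinarith
  have hNpos : (0 : ℝ) < N := by exact_mod_cast hN
  have hεpos : 0 < ε := Real.sqrt_pos.mpr (by positivity)
  -- the DKW bound with c = ε gives probability δ
  have hεsq : ε ^ 2 = Real.log (2 / δ) / (2 * N) :=
    Real.sq_sqrt (by positivity)
  have hexp : 2 * Real.exp (-2 * N * ε ^ 2) = δ := by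
    rw [hεsq]
    have : -2 * (N : ℝ) * (Real.log (2 / δ) / (2 * N)) = -Real.log (2 / δ) := by
      field_simp
    rw [this, Real.exp_neg, Real.exp_log (by positivity)]
    field_simp
  -- properties of the set S = {α | β ≤ F α}
  set S : Set ℝ := {α | β ≤ F α} with hS
  have hFmono : Monotone F := by
    intro a b hab
    rw [hFdef, hFdef]
    apply ENNReal.toReal_mono (measure_ne_top P _)
    exact measure_mono (fun ω hω => le_trans hω hab)
  have hSne : S.Nonempty := by
    have ht : Filter.Tendsto F Filter.atTop (nhds 1) := by
      have := ProbabilityTheory.tendsto_cdf_atTop μ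
      refine this.congr fun x => (hFcdf x).symm
    obtain ⟨α, hα⟩ := (ht.eventually (eventually_gt_nhds hβ1)).exists
    exact ⟨α, hα.le⟩
  have hSbd : BddBelow S := by
    have ht : Filter.Tendsto F Filter.atBot (nhds 0) := by
      have := ProbabilityTheory.tendsto_cdf_atBot μ
      refine this.congr fun x => (hFcdf x).symm
    obtain ⟨α₀, hα₀⟩ := (ht.eventually (eventually_lt_nhds hβ0)).exists
    refine ⟨α₀, fun a ha => ?_⟩
    by_contra hlt
    push_neg at hlt
    exact absurd (le_trans ha (hFmono hlt.le)) (not_le.mpr hα₀)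
  -- the bad event
  set bad : Set Ω := {ω | ∃ α : ℝ, ε < |Fhat ω α - F α|} with hbad
  have hbadle : P bad ≤ ENNReal.ofReal δ := by
    have := hDKW ε hεpos
    rwa [hexp] at this
  -- on the complement of bad, the conclusion holds
  have hincl : badᶜ ⊆ {ω |
      sInf (Real.toEReal '' {α : ℝ | β ≤ Fhat ω α + ε}) ≤ ((sInf S : ℝ) : EReal) ∧
      ((sInf S : ℝ) : EReal) ≤
        sInf (Real.toEReal '' {α : ℝ | β ≤ Fhat ω α - ε})} := by
    intro ω hω
    simp only [hbad, Set.mem_compl_iff, Set.mem_setOf_eq, not_exists, not_lt] at hω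
    constructor
    · calc sInf (Real.toEReal '' {α : ℝ | β ≤ Fhat ω α + ε})
          ≤ sInf (Real.toEReal '' S) := by
            apply sInf_le_sInf
            apply Set.image_mono
            intro a ha
            have h2 := abs_le.mp (hω a)
            have haF : β ≤ F a := ha
            show β ≤ Fhat ω a + ε
            linarith [h2.1]
        _ ≤ ((sInf S : ℝ) : EReal) := sInf_image_toEReal_le hSne hSbd
    · calc ((sInf S : ℝ) : EReal)
          ≤ sInf (Real.toEReal '' S) := le_sInf_image_toEReal hSbd
        _ ≤ sInf (Real.toEReal '' {α : ℝ | β ≤ Fhat ω α - ε}) := by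
            apply sInf_le_sInf
            apply Set.image_mono
            intro a ha
            have h2 := abs_le.mp (hω a)
            have haF : β ≤ Fhat ω a - ε := ha
            show β ≤ F a
            linarith [h2.2]
  refine le_trans ?_ (measure_mono hincl)
  -- P badᶜ ≥ 1 - δ
  have huniv : (1 : ENNReal) ≤ P bad + P badᶜ := by
    have := measure_union_le (μ := P) bad badᶜ
    rwa [Set.union_compl_self, measure_univ] at this
  have h1δ : ENNReal.ofReal (1 - δ) = 1 - ENNReal.ofReal δ := by
    rw [ENNReal.ofReal_sub _ hδ0.le, ENNReal.ofReal_one]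
  rw [h1δ, tsub_le_iff_right]
  calc (1 : ENNReal) ≤ P bad + P badᶜ := huniv
    _ ≤ ENNReal.ofReal δ + P badᶜ := by gcongr
    _ = P badᶜ + ENNReal.ofReal δ := add_comm _ _
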